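/- If α, β, γ, δ are angles with α + γ = β + δ, 0 < α + γ < π, all four angles strictly between 0 and π, and sin α / sin γ = sin β / sin δ, then α = β and γ = δ. -/
import Mathlib

open Real

theorem angle_sum_sine_ratio_lemma (α β γ δ : ℝ)
    (hα : α ∈ Set.Ioo 0 π) (hβ : β ∈ Set.Ioo 0 π)
    (hγ : γ ∈ Set.Ioo 0 π) (hδ : δ ∈ Set.Ioo 0 π)
    (hsum : α + γ = β + δ) (hlt : α + γ < π)
    (hratio : Real.sin α / Real.sin γ = Real.sin β / Real.sin δ) :
    α = β ∧ γ = δ := by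
  obtain ⟨hα0, hαπ⟩ := hα
  obtain ⟨hβ0, hβπ⟩ := hβ
  obtain ⟨hγ0, hγπ⟩ := hγ
  obtain ⟨hδ0, hδπ⟩ := hδ
  have hγs : Real.sin γ > 0 := Real.sin_pos_of_pos_of_lt_pi hγ0 hγπ
  have hδs : Real.sin δ > 0 := Real.sin_pos_of_pos_of_lt_pi hδ0 hδπ
  have hmul : Real.sin α * Real.sin δ = Real.sin β * Real.sin γ := by
    field_simp at hratio
    linarith [hratio]
  have hδeq : δ = (α + γ) - β := by linarith
  have key : Real.sin (α + γ) * Real.sin (α - β) = 0 := by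
    have h1 : Real.sin γ = Real.sin ((α + γ) - α) := by ring_nf
    rw [hδeq] at hmul
    rw [Real.sin_sub (α+γ) β, h1, Real.sin_sub (α+γ) α] at hmul
    rw [Real.sin_sub α β]
    nlinarith [hmul]
  have hs : Real.sin (α + γ) > 0 :=
    Real.sin_pos_of_pos_of_lt_pi (by linarith) hlt
  have h0 : Real.sin (α - β) = 0 := by
    rcases mul_eq_zero.mp key with h | h
    · linarith
    · exact h
  have hαβ : α = β := by
    have := (Real.sin_eq_zero_iff_of_lt_of_lt (by linarith) (by linarith)).mp h0
    linarith
  exact ⟨hαβ, by linarith⟩
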